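/- Let A ∈ ℝ^{M×N} with nonzero rows a¹, ..., a^M and let b ∈ ℝ^M be such that the linear system A·x = b is consistent. Let (x^k)_{k∈ℕ} be generated by the ASI–ART algorithm: x^1 ∈ ℝ^N arbitrary, (i_k)_{k∈ℕ} an almost cyclic control on {1,...,M}, delays (d_k)_{k∈ℕ} with 0 ≤ d_k ≤ min(τ, k−1) for some τ ≥ 0, x̂^k := x^{k−d_k}, and x^{k+1} := x^k for k ≤ τ and x^{k+1} := x^k − λ_k·((⟨a^{i_k}, x̂^k⟩ − b_{i_k})/‖a^{i_k}‖²)·a^{i_k} otherwise. If there is ε > 0 such that ε ≤ λ_k ≤ 1/(2τ + 1 + ε) for all k, then (x^k) converges to a solution x* of A·x = b. -/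

import Mathlib

open Filter Finset
open scoped RealInnerProductSpace

set_option maxHeartbeats 4000000 in
/-- convergence of ASI–ART. Let `A ∈ ℝ^{M×N}` with nonzero rows
`a¹, ..., a^M` and `b ∈ ℝ^M` with `A·x = b` consistent. The ASI–ART iteration is
`x (k+1) = x k` for `k ≤ τ` and otherwise
`x (k+1) = x k - λ k * ((⟨a^{i k}, x̂ k⟩ - b (i k))/‖a^{i k}‖²) • a^{i k}`,
where `x̂ k := x (k - d k)`, the delays satisfy `0 ≤ d k ≤ min τ (k-1)`, and `(i k)` is an
almost cyclic control on `{1, ..., M}`. If there is `ε > 0` with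
`ε ≤ λ k ≤ 1/(2τ + 1 + ε)` for all `k`, then `x` converges to a solution `x*` of
`A·x = b`. -/
theorem asi_art_convergence
    (M N τ : ℕ) (hM : 0 < M)
    (A : Matrix (Fin M) (Fin N) ℝ) (b : Fin M → ℝ)
    (hrows : ∀ i, (fun j => A i j) ≠ 0)
    (hconsistent : ∃ u : Fin N → ℝ, A.mulVec u = b)
    (x : ℕ → (Fin N → ℝ)) (lam : ℕ → ℝ) (ik : ℕ → Fin M) (d : ℕ → ℕ)
    (hlam : ∀ k, 0 < lam k ∧ lam k < 1)
    (hcyc : ∃ M' : ℕ, M ≤ M' ∧ ∀ k, ∀ i : Fin M,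
      ∃ l, k + 1 ≤ l ∧ l ≤ k + M' ∧ ik l = i)
    (hd : ∀ k, d k ≤ min τ (k - 1))
    (hx0 : x 0 = x 1)
    (hup : ∀ k, 1 ≤ k → x (k + 1) =
      if k ≤ τ then x k
      else x k -
        (lam k * (((∑ l, A (ik k) l * x (k - d k) l) - b (ik k)) /
          ∑ l, (A (ik k) l) ^ 2)) • (fun j => A (ik k) j))
    (ε : ℝ) (hε : 0 < ε)
    (hlam2 : ∀ k, ε ≤ lam k ∧ lam k ≤ 1 / (2 * (τ : ℝ) + 1 + ε)) :
    ∃ xstar : Fin N → ℝ, A.mulVec xstar = b ∧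
      Tendsto x atTop (nhds xstar) := by
  classical
  let e := WithLp.equiv 2 (Fin N → ℝ)
  set a : Fin M → EuclideanSpace ℝ (Fin N) := fun i => e.symm (fun j => A i j) with ha_def
  set y : ℕ → EuclideanSpace ℝ (Fin N) := fun k => e.symm (x k) with hy_def
  -- basic facts
  have hapos : ∀ i, (0:ℝ) < ‖a i‖ := by
    intro i; rw [norm_pos_iff]
    simpa [ha_def, e] using hrows i
  have hinner : ∀ i (v : Fin N → ℝ), (∑ l, A i l * v l) = ⟪a i, e.symm v⟫ := by
    intro i v; simp [ha_def, PiLp.inner_apply, RCLike.inner_apply, conj_trivial, e]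
    exact Finset.sum_congr rfl fun _ _ => mul_comm _ _
  have hnormsq : ∀ i, (∑ l, (A i l)^2) = ‖a i‖^2 := by
    intro i
    rw [← real_inner_self_eq_norm_sq]
    simp [ha_def, PiLp.inner_apply, RCLike.inner_apply, conj_trivial, sq, e]
    rw [← real_inner_self_eq_norm_mul_norm, PiLp.inner_apply]
    simp [sq]
  set r : ℕ → ℝ := fun k => ⟪a (ik k), y (k - d k)⟫ - b (ik k) with hr_def
  have hy' : ∀ k, 1 ≤ k → y (k+1) =
      if k ≤ τ then y k
      else y k - (lam k * (r k / ‖a (ik k)‖^2)) • a (ik k) := by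
    intro k hk
    have h := hup k hk
    rw [hinner, hnormsq] at h
    simp only [hy_def, hr_def]
    rw [h]
    split
    · rfl
    · rfl
  -- increments
  obtain ⟨w, hw_def⟩ : ∃ w : ℕ → EuclideanSpace ℝ (Fin N), w = fun k => y (k+1) - y k := ⟨_, rfl⟩
  obtain ⟨s, hs_def⟩ : ∃ s : ℕ → ℝ, s = fun k => ‖w k‖ := ⟨_, rfl⟩
  obtain ⟨S, hS_def⟩ : ∃ S : ℕ → ℝ, S = fun k => s k ^ 2 := ⟨_, rfl⟩
  have hsnn : ∀ k, 0 ≤ s k := fun k => by rw [hs_def]; exact norm_nonneg _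
  have hSnn : ∀ k, 0 ≤ S k := fun k => by rw [hS_def]; exact sq_nonneg _
  have hstep : ∀ k, y (k+1) = y k + w k := by intro k; rw [hw_def]; simp
  have hw0 : ∀ k, k ≤ τ → w k = 0 := by
    intro k hk
    rcases Nat.eq_zero_or_pos k with h0 | h1
    · subst h0; simp [hw_def, hy_def, hx0]
    · have h := hy' k h1; rw [if_pos hk] at h; simp [hw_def, h]
  have hwk : ∀ k, τ < k → w k = -((lam k * (r k / ‖a (ik k)‖^2)) • a (ik k)) := by
    intro k hk
    have h := hy' k (by omega); rw [if_neg (by omega)] at h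
    simp [hw_def, h]
  have htel : ∀ m k, m ≤ k → y k - y m = ∑ j ∈ Finset.Ico m k, w j := by
    intro m k hmk
    have h1 : ∀ n, ∑ j ∈ range n, w j = y n - y 0 := by
      intro n
      simpa [hw_def] using Finset.sum_range_sub (f := y) n
    rw [Finset.sum_Ico_eq_sub _ hmk, h1, h1]
    abel
  have hyd : ∀ k, ‖y k - y (k - d k)‖ ≤ ∑ j ∈ Finset.Ico (k - τ) k, s j := by
    intro k
    have h1 : k - d k ≤ k := Nat.sub_le _ _
    calc ‖y k - y (k - d k)‖ = ‖∑ j ∈ Finset.Ico (k - d k) k, w j‖ := by rw [htel _ _ h1]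
      _ ≤ ∑ j ∈ Finset.Ico (k - d k) k, s j := by
          simp only [hs_def]; exact norm_sum_le _ _
      _ ≤ ∑ j ∈ Finset.Ico (k - τ) k, s j := by
          apply Finset.sum_le_sum_of_subset_of_nonneg
          · exact Finset.Ico_subset_Ico (by have := hd k; omega) le_rfl
          · exact fun j _ _ => hsnn j
  -- the key one-step inequality
  have hsol : ∀ (u : EuclideanSpace ℝ (Fin N)), (∀ i, ⟪a i, u⟫ = b i) → ∀ k,
      ‖y (k+1) - u‖^2 ≤ ‖y k - u‖^2 - (τ+1 : ℝ) * S k + ∑ j ∈ Finset.Ico (k - τ) k, S j := by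
    intro u hu k
    by_cases hk : k ≤ τ
    · have hwz := hw0 k hk
      have hSz : S k = 0 := by simp [hS_def, hs_def, hwz]
      have hnn : (0:ℝ) ≤ ∑ j ∈ Finset.Ico (k - τ) k, S j :=
        Finset.sum_nonneg fun j _ => hSnn j
      rw [hstep k, hwz, hSz]
      simp only [add_zero, mul_zero]
      linarith
    · push_neg at hk
      set i := ik k
      set c := lam k * (r k / ‖a i‖^2) with hc_def
      have hwk' := hwk k hk
      have hα := hapos i
      have hα' : ‖a i‖ ≠ 0 := ne_of_gt hα
      have hlk := hlam k
      have hlk2 := hlam2 k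
      have hsk : s k = |c| * ‖a i‖ := by
        rw [hs_def]; simp only [hwk', norm_neg, norm_smul, Real.norm_eq_abs]; rfl
      have hSk : S k = (lam k)^2 * ((r k)^2 / ‖a i‖^2) := by
        simp only [hS_def]
        rw [hsk, mul_pow, sq_abs, hc_def]
        field_simp
      have hcr : c * r k = lam k * ((r k)^2 / ‖a i‖^2) := by
        rw [hc_def]; field_simp
      -- expansion
      have hexp : ‖y (k+1) - u‖^2 = ‖y k - u‖^2 + 2*⟪y k - u, w k⟫ + S k := by
        have h2 : y (k+1) - u = (y k - u) + w k := by rw [hstep]; abel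
        rw [h2, norm_add_sq_real, hS_def, hs_def]
      have hinn : ⟪y k - u, w k⟫ = -(c * ⟪a i, y k - y (k - d k)⟫) - c * r k := by
        rw [hwk', inner_neg_right, real_inner_smul_right]
        have hsplit : ⟪y k - u, a i⟫ = ⟪a i, y k - y (k - d k)⟫ + r k := by
          rw [real_inner_comm]
          have h3 : y k - u = (y k - y (k - d k)) + (y (k - d k) - u) := by abel
          rw [h3, inner_add_right]
          congr 1
          rw [inner_sub_right, hu i, hr_def]
        rw [hsplit]; ring
      -- cross term bound
      have hcross : -(2*(c * ⟪a i, y k - y (k - d k)⟫)) ≤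
          (τ:ℝ) * S k + ∑ j ∈ Finset.Ico (k - τ) k, S j := by
        have h1 : -(2*(c * ⟪a i, y k - y (k - d k)⟫)) ≤ 2 * (s k * ∑ j ∈ Finset.Ico (k - τ) k, s j) := by
          have h2 : |⟪a i, y k - y (k - d k)⟫| ≤ ‖a i‖ * ‖y k - y (k - d k)‖ :=
            abs_real_inner_le_norm _ _
          have h3 : -(c * ⟪a i, y k - y (k - d k)⟫) ≤ |c| * (‖a i‖ * ‖y k - y (k - d k)‖) := by
            calc -(c * ⟪a i, y k - y (k - d k)⟫) ≤ |c * ⟪a i, y k - y (k - d k)⟫| := neg_le_abs _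
              _ = |c| * |⟪a i, y k - y (k - d k)⟫| := abs_mul _ _
              _ ≤ |c| * (‖a i‖ * ‖y k - y (k - d k)‖) := by
                  exact mul_le_mul_of_nonneg_left h2 (abs_nonneg _)
          have h4 : |c| * (‖a i‖ * ‖y k - y (k - d k)‖) = s k * ‖y k - y (k - d k)‖ := by
            rw [hsk]; ring
          have h5 : s k * ‖y k - y (k - d k)‖ ≤ s k * ∑ j ∈ Finset.Ico (k - τ) k, s j :=
            mul_le_mul_of_nonneg_left (hyd k) (hsnn k)
          nlinarith [h3, h5]
        have h6 : 2 * (s k * ∑ j ∈ Finset.Ico (k - τ) k, s j) ≤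
            (τ:ℝ) * S k + ∑ j ∈ Finset.Ico (k - τ) k, S j := by
          have h7 : 2 * (s k * ∑ j ∈ Finset.Ico (k - τ) k, s j)
              = ∑ j ∈ Finset.Ico (k - τ) k, (2 * (s k * s j)) := by
            rw [Finset.mul_sum, Finset.mul_sum]
          have h8 : ∑ j ∈ Finset.Ico (k - τ) k, (2 * (s k * s j)) ≤
              ∑ j ∈ Finset.Ico (k - τ) k, (S k + S j) := by
            apply Finset.sum_le_sum
            intro j _
            simp only [hS_def]
            simpa [mul_assoc] using two_mul_le_add_sq (s k) (s j)
          have h9 : ∑ j ∈ Finset.Ico (k - τ) k, (S k + S j)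
              = (Finset.Ico (k - τ) k).card * S k + ∑ j ∈ Finset.Ico (k - τ) k, S j := by
            rw [Finset.sum_add_distrib, Finset.sum_const, nsmul_eq_mul]
          have h10 : ((Finset.Ico (k - τ) k).card : ℝ) ≤ (τ:ℝ) := by
            have : (Finset.Ico (k - τ) k).card ≤ τ := by rw [Nat.card_Ico]; omega
            exact_mod_cast this
          have h11 : ((Finset.Ico (k - τ) k).card : ℝ) * S k ≤ (τ:ℝ) * S k :=
            mul_le_mul_of_nonneg_right h10 (hSnn k)
          linarith
        linarith
      -- the coefficient bound
      have hτnn : (0:ℝ) ≤ (τ:ℝ) := Nat.cast_nonneg _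
      have hlamsmall : (2*(τ:ℝ)+2) * lam k ≤ 2 := by
        have hpos : (0:ℝ) < 2*(τ:ℝ)+1+ε := by linarith
        have h12 : lam k * (2*(τ:ℝ)+1+ε) ≤ 1 := (le_div_iff₀ hpos).1 hlk2.2
        have e1 : lam k * (2*(τ:ℝ)+2) ≤ lam k * (2*(2*(τ:ℝ)+1+ε)) :=
          mul_le_mul_of_nonneg_left (by linarith only [hε, hτnn]) hlk.1.le
        linarith only [e1, h12]
      have hP : (0:ℝ) ≤ (r k)^2 / ‖a i‖^2 := div_nonneg (sq_nonneg _) (sq_nonneg _)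
      have hfin : (2*(τ:ℝ)+2) * S k ≤ 2 * (c * r k) := by
        rw [hSk, hcr]
        have := mul_le_mul_of_nonneg_right hlamsmall (mul_nonneg hlk.1.le hP)
        linarith only [this]
      rw [hexp, hinn]
      linarith only [hcross, hfin]
  -- double counting
  have hdouble : ∀ n, ∑ k ∈ range n, ∑ j ∈ Finset.Ico (k - τ) k, S j
      ≤ (τ:ℝ) * ∑ j ∈ range n, S j := by
    intro n
    have hcomm : ∑ k ∈ range n, ∑ j ∈ Finset.Ico (k - τ) k, S j
        = ∑ j ∈ range n, ∑ _k ∈ Finset.Ioc j (j + τ) ∩ range n, S j := by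
      apply Finset.sum_comm'
      intro k j
      simp only [Finset.mem_range, Finset.mem_Ico, Finset.mem_Ioc, Finset.mem_inter]
      omega
    rw [hcomm]
    calc ∑ j ∈ range n, ∑ _k ∈ Finset.Ioc j (j + τ) ∩ range n, S j
        = ∑ j ∈ range n, ((Finset.Ioc j (j + τ) ∩ range n).card : ℝ) * S j := by
          refine Finset.sum_congr rfl fun j _ => ?_
          rw [Finset.sum_const, nsmul_eq_mul]
      _ ≤ ∑ j ∈ range n, (τ:ℝ) * S j := by
          refine Finset.sum_le_sum fun j _ => ?_
          refine mul_le_mul_of_nonneg_right ?_ (hSnn j)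
          have hcard : (Finset.Ioc j (j + τ) ∩ range n).card ≤ τ := by
            calc (Finset.Ioc j (j + τ) ∩ range n).card
                ≤ (Finset.Ioc j (j + τ)).card := Finset.card_le_card Finset.inter_subset_left
              _ = τ := by rw [Nat.card_Ioc]; omega
          exact_mod_cast hcard
      _ = (τ:ℝ) * ∑ j ∈ range n, S j := (Finset.mul_sum _ _ _).symm
  -- key summed estimate
  have hkey : ∀ (u : EuclideanSpace ℝ (Fin N)), (∀ i, ⟪a i, u⟫ = b i) → ∀ n,
      ‖y n - u‖^2 + ∑ k ∈ range n, S k ≤ ‖y 0 - u‖^2 := by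
    intro u hu n
    have h1 : ‖y n - u‖^2 - ‖y 0 - u‖^2
        = ∑ k ∈ range n, (‖y (k+1) - u‖^2 - ‖y k - u‖^2) :=
      (Finset.sum_range_sub (fun k => ‖y k - u‖^2) n).symm
    have h2 : ∑ k ∈ range n, (‖y (k+1) - u‖^2 - ‖y k - u‖^2)
        ≤ ∑ k ∈ range n, (-((τ+1:ℝ) * S k) + ∑ j ∈ Finset.Ico (k - τ) k, S j) :=
      Finset.sum_le_sum fun k _ => by linarith only [hsol u hu k]
    have h3 : ∑ k ∈ range n, (-((τ+1:ℝ) * S k) + ∑ j ∈ Finset.Ico (k - τ) k, S j)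
        = -((τ+1:ℝ) * ∑ k ∈ range n, S k)
          + ∑ k ∈ range n, ∑ j ∈ Finset.Ico (k - τ) k, S j := by
      rw [Finset.sum_add_distrib, Finset.mul_sum, Finset.sum_neg_distrib]
    have h4 := hdouble n
    linarith only [h1, h2, h3, h4]
  -- a particular solution
  obtain ⟨u₀', hu₀'⟩ := hconsistent
  set u₀ : EuclideanSpace ℝ (Fin N) := e.symm u₀' with hu₀_def
  have hu₀ : ∀ i, ⟪a i, u₀⟫ = b i := by
    intro i
    rw [hu₀_def, ← hinner i u₀']
    have h := congrFun hu₀' i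
    simpa [Matrix.mulVec, dotProduct] using h
  -- summability of S and basic limits
  have hSsum : Summable S := by
    apply summable_of_sum_range_le hSnn (c := ‖y 0 - u₀‖^2)
    intro n
    linarith only [hkey u₀ hu₀ n, sq_nonneg ‖y n - u₀‖]
  have hS0 : Tendsto S atTop (nhds 0) := hSsum.tendsto_atTop_zero
  have hs0 : Tendsto s atTop (nhds 0) := by
    have h1 : Tendsto (fun k => Real.sqrt (S k)) atTop (nhds 0) := by
      simpa [Function.comp_def] using (Real.continuous_sqrt.tendsto 0).comp hS0
    have h2 : (fun k => Real.sqrt (S k)) = s := by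
      funext k; simp only [hS_def]; exact Real.sqrt_sq (hsnn k)
    rwa [h2] at h1
  have hbnd : ∀ n, y n ∈ Metric.closedBall u₀ ‖y 0 - u₀‖ := by
    intro n
    rw [Metric.mem_closedBall, dist_eq_norm]
    have h2 : (0:ℝ) ≤ ∑ k ∈ range n, S k := Finset.sum_nonneg fun k _ => hSnn k
    have h3 : ‖y n - u₀‖^2 ≤ ‖y 0 - u₀‖^2 := by linarith only [hkey u₀ hu₀ n, h2]
    have h4 := Real.sqrt_le_sqrt h3
    rwa [Real.sqrt_sq (norm_nonneg _), Real.sqrt_sq (norm_nonneg _)] at h4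
  -- a uniform bound on the rows
  have hFinM : Nonempty (Fin M) := ⟨⟨0, hM⟩⟩
  obtain ⟨C, hC_def⟩ : ∃ C : ℝ, C = ∑ i, ‖a i‖ := ⟨_, rfl⟩
  have hCb : ∀ i, ‖a i‖ ≤ C := by
    intro i; rw [hC_def]
    exact Finset.single_le_sum (f := fun i => ‖a i‖) (fun j _ => norm_nonneg _)
      (Finset.mem_univ i)
  have hCpos : 0 < C := lt_of_lt_of_le (hapos (Classical.arbitrary _)) (hCb _)
  -- the residuals tend to zero
  have hrb : ∀ k, τ < k → |r k| ≤ s k * (C / ε) := by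
    intro k hk
    have h := hwk k hk
    have hl := (hlam k).1
    have hα := hapos (ik k)
    have hsk' : s k = (lam k * (|r k| / ‖a (ik k)‖^2)) * ‖a (ik k)‖ := by
      simp only [hs_def]; rw [h]
      rw [norm_neg, norm_smul, Real.norm_eq_abs, abs_mul, abs_of_pos hl, abs_div,
        abs_of_pos (pow_pos hα 2)]
    have gen : ∀ R L α : ℝ, 0 < L → 0 < α → L * (R / α ^ 2) * α * α / L = R := by
      intro R L α hL hα'
      field_simp
    have heq : |r k| = s k * ‖a (ik k)‖ / lam k := by
      rw [hsk']
      exact (gen _ _ _ hl hα).symm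
    rw [heq]
    have hdd : s k * ‖a (ik k)‖ / lam k ≤ s k * C / ε :=
      div_le_div₀ (mul_nonneg (hsnn k) hCpos.le)
        (mul_le_mul_of_nonneg_left (hCb (ik k)) (hsnn k)) hε (hlam2 k).1
    calc s k * ‖a (ik k)‖ / lam k ≤ s k * C / ε := hdd
      _ = s k * (C / ε) := by ring
  have hr0 : Tendsto (fun k => |r k|) atTop (nhds 0) := by
    apply squeeze_zero' (Filter.Eventually.of_forall fun k => abs_nonneg _)
      (Filter.eventually_atTop.2 ⟨τ+1, fun k hk => hrb k (by omega)⟩)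
    have := hs0.mul_const (C / ε)
    simpa using this
  have ht0 : Tendsto (fun k => ∑ j ∈ Finset.Ico (k - τ) k, s j) atTop (nhds 0) := by
    have h2 : Tendsto (fun k => ∑ m ∈ range τ, s (k - τ + m)) atTop (nhds 0) := by
      have h3 : ∀ m ∈ range τ, Tendsto (fun k => s (k - τ + m)) atTop (nhds (0:ℝ)) := by
        intro m _
        apply hs0.comp
        apply Filter.tendsto_atTop_atTop.2
        intro bnd
        exact ⟨bnd + τ, fun k hk => by omega⟩
      simpa using tendsto_finset_sum (range τ) h3
    refine h2.congr' (Filter.eventually_atTop.2 ⟨τ, fun k hk => ?_⟩)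
    show ∑ m ∈ range τ, s (k - τ + m) = ∑ j ∈ Finset.Ico (k - τ) k, s j
    rw [Finset.sum_Ico_eq_sum_range, show k - (k - τ) = τ from by omega]
  have hyd0 : Tendsto (fun k => ‖y k - y (k - d k)‖) atTop (nhds 0) :=
    squeeze_zero' (Filter.Eventually.of_forall fun k => norm_nonneg _)
      (Filter.Eventually.of_forall fun k => hyd k) ht0
  have hg0 : Tendsto (fun k => |⟪a (ik k), y k⟫ - b (ik k)|) atTop (nhds 0) := by
    apply squeeze_zero' (Filter.Eventually.of_forall fun k => abs_nonneg _)
      (g := fun k => |r k| + C * ‖y k - y (k - d k)‖)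
      (Filter.Eventually.of_forall fun k => ?_)
    · have := hr0.add (ht0.const_mul C)
      have h5 := hr0.add (hyd0.const_mul C)
      simpa using h5
    · have e1 : ⟪a (ik k), y k⟫ - b (ik k) = r k + ⟪a (ik k), y k - y (k - d k)⟫ := by
        rw [hr_def, inner_sub_right]; ring
      rw [e1]
      refine (abs_add_le _ _).trans (add_le_add le_rfl ?_)
      refine (abs_real_inner_le_norm _ _).trans ?_
      exact mul_le_mul_of_nonneg_right (hCb _) (norm_nonneg _)
  -- almost cyclic control: all hyperplane residuals tend to zero
  have hres : ∀ i : Fin M, Tendsto (fun k => |⟪a i, y k⟫ - b i|) atTop (nhds 0) := by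
    obtain ⟨M', hMM', hM'⟩ := hcyc
    intro i
    rw [Metric.tendsto_atTop]
    intro δ hδ
    obtain ⟨K1, hK1⟩ := Metric.tendsto_atTop.1 hg0 (δ/2) (by linarith)
    have hden : (0:ℝ) < (M':ℝ) * C + 1 := by
      have := mul_nonneg (Nat.cast_nonneg M' : (0:ℝ) ≤ (M':ℝ)) hCpos.le
      linarith
    obtain ⟨K2, hK2⟩ := Metric.tendsto_atTop.1 hs0 (δ / (2 * ((M':ℝ) * C + 1)))
      (by positivity)
    refine ⟨max K1 K2, fun k hk => ?_⟩
    obtain ⟨l, hl1, hl2, hl3⟩ := hM' k i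
    rw [Real.dist_eq, sub_zero, abs_abs]
    have hkl : k ≤ l := by omega
    have e1 : ⟪a i, y k⟫ - b i = (⟪a i, y l⟫ - b i) + ⟪a i, y k - y l⟫ := by
      rw [inner_sub_right]; ring
    have e2 : ‖y k - y l‖ ≤ ∑ j ∈ Finset.Ico k l, s j := by
      rw [norm_sub_rev, htel k l hkl]
      simp only [hs_def]
      exact norm_sum_le _ _
    have e3 : ∑ j ∈ Finset.Ico k l, s j ≤ (M':ℝ) * (δ / (2 * ((M':ℝ) * C + 1))) := by
      have e4 : ∀ j ∈ Finset.Ico k l, s j ≤ δ / (2 * ((M':ℝ) * C + 1)) := by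
        intro j hj
        rw [Finset.mem_Ico] at hj
        have := hK2 j (by omega)
        rw [Real.dist_eq, sub_zero, abs_of_nonneg (hsnn j)] at this
        exact this.le
      calc ∑ j ∈ Finset.Ico k l, s j
          ≤ (Finset.Ico k l).card * (δ / (2 * ((M':ℝ) * C + 1))) := by
            rw [← nsmul_eq_mul]
            exact Finset.sum_le_card_nsmul _ _ _ e4
        _ ≤ (M':ℝ) * (δ / (2 * ((M':ℝ) * C + 1))) := by
            refine mul_le_mul_of_nonneg_right ?_ (by positivity)
            have : (Finset.Ico k l).card ≤ M' := by rw [Nat.card_Ico]; omega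
            exact_mod_cast this
    have e5 : |⟪a i, y l⟫ - b i| < δ/2 := by
      have h6 := hK1 l (by omega)
      rw [Real.dist_eq, sub_zero, abs_abs, hl3] at h6
      exact h6
    have e6 : C * ((M':ℝ) * (δ / (2 * ((M':ℝ) * C + 1)))) ≤ δ/2 := by
      rw [show C * ((M':ℝ) * (δ / (2 * ((M':ℝ) * C + 1))))
          = C * (M':ℝ) * δ / (2 * ((M':ℝ) * C + 1)) from by ring]
      rw [div_le_div_iff₀ (by linarith) (by norm_num)]
      nlinarith [hδ.le]
    have e7 : |⟪a i, y k⟫ - b i| ≤ |⟪a i, y l⟫ - b i| + C * ‖y k - y l‖ := by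
      rw [e1]
      refine (abs_add_le _ _).trans (add_le_add le_rfl ?_)
      refine (abs_real_inner_le_norm _ _).trans ?_
      exact mul_le_mul_of_nonneg_right (hCb _) (norm_nonneg _)
    have e8 : C * ‖y k - y l‖ ≤ C * ((M':ℝ) * (δ / (2 * ((M':ℝ) * C + 1)))) :=
      mul_le_mul_of_nonneg_left (e2.trans e3) hCpos.le
    calc |⟪a i, y k⟫ - b i| ≤ |⟪a i, y l⟫ - b i| + C * ‖y k - y l‖ := e7
      _ < δ/2 + δ/2 := by linarith only [e5, e6, e8]
      _ = δ := by ring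
  -- a cluster point
  obtain ⟨xs, _, φ, hφmono, hφconv⟩ :=
    (isCompact_closedBall u₀ ‖y 0 - u₀‖).tendsto_subseq hbnd
  -- the cluster point is a solution
  have hxs_sol : ∀ i, ⟪a i, xs⟫ = b i := by
    intro i
    have hcont : Continuous (fun v : EuclideanSpace ℝ (Fin N) => |⟪a i, v⟫ - b i|) :=
      ((continuous_const.inner continuous_id).sub continuous_const).abs
    have h1 : Tendsto (fun n => |⟪a i, y (φ n)⟫ - b i|) atTop (nhds (|⟪a i, xs⟫ - b i|)) :=
      (hcont.tendsto xs).comp hφconv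
    have h2 : Tendsto (fun n => |⟪a i, y (φ n)⟫ - b i|) atTop (nhds 0) :=
      (hres i).comp hφmono.tendsto_atTop
    have h3 := tendsto_nhds_unique h1 h2
    have h4 := abs_eq_zero.1 h3
    linarith only [h4]
  -- quasi-Fejér convergence to the cluster point
  obtain ⟨cc, hcc_def⟩ : ∃ cc : ℕ → ℝ, cc = fun k => ∑ j ∈ Finset.Ico (k - τ) k, S j :=
    ⟨_, rfl⟩
  have hccnn : ∀ k, 0 ≤ cc k := by
    intro k; rw [hcc_def]; exact Finset.sum_nonneg fun j _ => hSnn j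
  have hccsum : Summable cc := by
    apply summable_of_sum_range_le hccnn (c := (τ:ℝ) * ‖y 0 - u₀‖^2)
    intro n
    have h1 := hdouble n
    have h2 := hkey u₀ hu₀ n
    have h3 : ∑ k ∈ range n, cc k = ∑ k ∈ range n, ∑ j ∈ Finset.Ico (k - τ) k, S j := by
      simp only [hcc_def]
    have h4 : (τ:ℝ) * ∑ j ∈ range n, S j ≤ (τ:ℝ) * ‖y 0 - u₀‖^2 :=
      mul_le_mul_of_nonneg_left (by linarith only [h2, sq_nonneg ‖y n - u₀‖])
        (Nat.cast_nonneg τ)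
    linarith only [h1, h3, h4]
  have hGstep : ∀ k, ‖y (k+1) - xs‖^2 ≤ ‖y k - xs‖^2 + cc k := by
    intro k
    have h1 := hsol xs hxs_sol k
    have h2 : (0:ℝ) ≤ ((τ:ℝ)+1) * S k :=
      mul_nonneg (by positivity) (hSnn k)
    rw [hcc_def]
    linarith only [h1, h2]
  obtain ⟨T, hT_def⟩ : ∃ T : ℕ → ℝ, T = fun n => ∑' j, cc (j + n) := ⟨_, rfl⟩
  have hTtail : ∀ n, T n = cc n + T (n+1) := by
    intro n
    rw [hT_def]
    have hsum : Summable (fun j => cc (j + n)) := (summable_nat_add_iff n).2 hccsum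
    show (∑' j, cc (j + n)) = cc n + ∑' j, cc (j + (n+1))
    rw [hsum.tsum_eq_zero_add]
    simp only [zero_add]
    congr 1
    exact tsum_congr fun j => by rw [show j + 1 + n = j + (n+1) from by omega]
  have hTnn : ∀ n, 0 ≤ T n := by
    intro n; rw [hT_def]; exact tsum_nonneg fun j => hccnn _
  have hT0 : Tendsto T atTop (nhds 0) := by
    rw [hT_def]; exact tendsto_sum_nat_add cc
  obtain ⟨F, hF_def⟩ : ∃ F : ℕ → ℝ, F = fun n => ‖y n - xs‖^2 + T n := ⟨_, rfl⟩
  have hFanti : Antitone F := by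
    apply antitone_nat_of_succ_le
    intro n
    simp only [hF_def]
    linarith only [hGstep n, hTtail n]
  have hFbdd : BddBelow (Set.range F) := by
    refine ⟨0, ?_⟩
    rintro v ⟨n, rfl⟩
    simp only [hF_def]
    have := hTnn n
    positivity
  have hFconv : Tendsto F atTop (nhds (⨅ n, F n)) := tendsto_atTop_ciInf hFanti hFbdd
  have hGconv : Tendsto (fun n => ‖y n - xs‖^2) atTop (nhds (⨅ n, F n)) := by
    have h1 := hFconv.sub hT0
    have h2 : (fun n => F n - T n) = fun n => ‖y n - xs‖^2 := by
      funext n; simp only [hF_def]; ring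
    rw [h2] at h1
    simpa using h1
  have hGsub : Tendsto (fun n => ‖y (φ n) - xs‖^2) atTop (nhds 0) := by
    have h1 : Tendsto (fun n => y (φ n) - xs) atTop (nhds 0) := by
      have := hφconv.sub (tendsto_const_nhds (x := xs))
      simpa using this
    have h2 := h1.norm
    simp only [norm_zero] at h2
    have h3 := h2.pow 2
    simpa using h3
  have hzero : (⨅ n, F n) = (0:ℝ) :=
    tendsto_nhds_unique (hGconv.comp hφmono.tendsto_atTop) hGsub
  have hynorm : Tendsto (fun n => ‖y n - xs‖^2) atTop (nhds 0) := hzero ▸ hGconv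
  have hyconv : Tendsto y atTop (nhds xs) := by
    have h1 : Tendsto (fun n => ‖y n - xs‖) atTop (nhds 0) := by
      have h2 := (Real.continuous_sqrt.tendsto 0).comp hynorm
      have h3 : ((fun x => Real.sqrt x) ∘ fun n => ‖y n - xs‖^2) = fun n => ‖y n - xs‖ :=
        funext fun n => Real.sqrt_sq (norm_nonneg _)
      rw [h3] at h2
      simpa using h2
    exact tendsto_iff_norm_sub_tendsto_zero.2 h1
  -- conclusion
  refine ⟨e xs, ?_, ?_⟩
  · funext i
    have h1 : A.mulVec (e xs) i = ∑ l, A i l * (e xs) l := by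
      simp [Matrix.mulVec, dotProduct]
    rw [h1, hinner i (e xs), Equiv.symm_apply_apply]
    exact hxs_sol i
  · have hcont : Continuous (PiLp.continuousLinearEquiv 2 ℝ (fun _ : Fin N => ℝ)) :=
      (PiLp.continuousLinearEquiv 2 ℝ (fun _ : Fin N => ℝ)).continuous
    have h2 : Tendsto (fun k => (PiLp.continuousLinearEquiv 2 ℝ (fun _ : Fin N => ℝ)) (y k))
        atTop (nhds ((PiLp.continuousLinearEquiv 2 ℝ (fun _ : Fin N => ℝ)) xs)) :=
      (hcont.tendsto xs).comp hyconv
    exact h2
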